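/- Let P be a locally finite partially ordered set, F a field, G a group, and θ, μ : P → G functions with G_θ and G_μ finite. Then there exists an F-algebra automorphism φ of the incidence algebra I(P,F) with φ(A^θ(g)) = A^μ(g) for every g ∈ G (i.e., the elementary graded algebras A^θ and A^μ are isomorphic as G-graded algebras) if and only if there exists an order automorphism σ of P such that the function x ↦ μ(x)·θ(σ⁻¹(x))⁻¹ is constant on each connected component of P. -/

import Mathlib

set_option linter.unusedSectionVars false
set_option maxHeartbeats 1000000
open Finset IncidenceAlgebra

/-- `A^θ(g)`: the `F`-subspace of the incidence algebra `I(P,F)` consisting of the functions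
`f` with `f x y = 0` whenever `x ≤ y` and `(θ x)⁻¹ * θ y ≠ g`. -/
def elemSubspace (F : Type*) [Field F] {α : Type*} [PartialOrder α] [LocallyFiniteOrder α]
    {G : Type*} [Group G] (θ : α → G) (g : G) :
    Submodule F (IncidenceAlgebra F α) where
  carrier := {f | ∀ x y : α, x ≤ y → (θ x)⁻¹ * θ y ≠ g → f x y = 0}
  zero_mem' := by intro x y _ _; rfl
  add_mem' := by
    intro f₁ f₂ h₁ h₂ x y hxy hg
    show (f₁ + f₂) x y = 0
    rw [IncidenceAlgebra.add_apply, h₁ x y hxy hg, h₂ x y hxy hg, add_zero]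
  smul_mem' := by
    intro c f hf x y hxy hg
    show (c • f) x y = 0
    rw [IncidenceAlgebra.constSMul_apply, hf x y hxy hg, smul_zero]

namespace IncidenceAux



variable {F α : Type*} [Field F] [PartialOrder α] [LocallyFiniteOrder α] [DecidableEq α]

/-- The single-entry element of the incidence algebra. -/
def single (a b : α) (h : a ≤ b) : IncidenceAlgebra F α :=
  ⟨fun x y => if x = a ∧ y = b then 1 else 0, fun x y hxy => by
    rw [if_neg]
    rintro ⟨rfl, rfl⟩
    exact hxy h⟩

lemma single_apply (a b : α) (h : a ≤ b) (x y : α) :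
    (single a b h : IncidenceAlgebra F α) x y = if x = a ∧ y = b then 1 else 0 := rfl

/-- The idempotent `e_s`. -/
def e (s : α) : IncidenceAlgebra F α := single s s le_rfl

lemma e_apply (s x y : α) : (e s : IncidenceAlgebra F α) x y = if x = s ∧ y = s then 1 else 0 :=
  rfl

lemma single_apply_self (a b : α) (h : a ≤ b) : (single a b h : IncidenceAlgebra F α) a b = 1 := by
  rw [single_apply, if_pos ⟨rfl, rfl⟩]

lemma single_ne_zero (a b : α) (h : a ≤ b) : (single a b h : IncidenceAlgebra F α) ≠ 0 := by
  intro h0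
  have := single_apply_self (F := F) a b h
  rw [h0] at this
  simp [IncidenceAlgebra.zero_apply] at this

lemma e_mul_apply (s : α) (k : IncidenceAlgebra F α) (a b : α) :
    (((e s : IncidenceAlgebra F α)) * k) a b = if a = s then k a b else 0 := by
  rw [mul_apply]
  by_cases has : a = s
  · subst has
    rw [if_pos rfl]
    have : ∀ x ∈ Icc a b, (e a : IncidenceAlgebra F α) a x * k x b
        = if x = a then k x b else 0 := by
      intro x _
      rw [e_apply]
      by_cases hx : x = a <;> simp [hx]
    rw [Finset.sum_congr rfl this, Finset.sum_ite_eq']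
    by_cases hb : a ≤ b
    · simp [mem_Icc, hb]
    · simp [mem_Icc, hb, apply_eq_zero_of_not_le hb]
  · rw [if_neg has]
    apply Finset.sum_eq_zero
    intro x _
    rw [e_apply, if_neg (by tauto), zero_mul]

lemma mul_e_apply (t : α) (k : IncidenceAlgebra F α) (a b : α) :
    (k * ((e t : IncidenceAlgebra F α))) a b = if b = t then k a b else 0 := by
  rw [mul_apply]
  by_cases hbt : b = t
  · subst hbt
    rw [if_pos rfl]
    have : ∀ x ∈ Icc a b, k a x * (e b : IncidenceAlgebra F α) x b
        = if x = b then k a x else 0 := by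
      intro x _
      rw [e_apply]
      by_cases hx : x = b <;> simp [hx]
    rw [Finset.sum_congr rfl this, Finset.sum_ite_eq']
    by_cases hb : a ≤ b
    · simp [mem_Icc, hb]
    · simp [mem_Icc, hb, apply_eq_zero_of_not_le hb]
  · rw [if_neg hbt]
    apply Finset.sum_eq_zero
    intro x _
    rw [e_apply, if_neg (by tauto), mul_zero]

lemma mul_diag (f g : IncidenceAlgebra F α) (x : α) : (f * g) x x = f x x * g x x := by
  rw [mul_apply, Icc_self, Finset.sum_singleton]

lemma one_diag (x : α) : (1 : IncidenceAlgebra F α) x x = 1 := by simp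

lemma e_idem (s : α) : (e s : IncidenceAlgebra F α) * e s = e s := by
  ext a b _
  rw [e_mul_apply]
  by_cases has : a = s
  · simp [has]
  · rw [if_neg has, e_apply, if_neg (by tauto)]

lemma e_mul_single_mul_e (x y : α) (h : x ≤ y) :
    (e x : IncidenceAlgebra F α) * single x y h * e y = single x y h := by
  ext a b _
  rw [mul_e_apply, e_mul_apply]
  by_cases hb : b = y
  · by_cases ha : a = x
    · simp [ha, hb, single_apply]
    · simp [ha, hb, single_apply]
  · simp [hb, single_apply]

/-- if `m = e s * m * e t` then `m` is concentrated at `(s,t)`. -/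
lemma apply_eq_of_conc {s t : α} {m : IncidenceAlgebra F α}
    (hm : (e s) * m * (e t) = m) (a b : α) :
    m a b = if a = s ∧ b = t then m s t else 0 := by
  by_cases hab : a = s ∧ b = t
  · rw [if_pos hab, hab.1, hab.2]
  · rw [if_neg hab]
    conv_lhs => rw [← hm]
    rw [mul_e_apply, e_mul_apply]
    by_cases hb : b = t
    · rw [if_pos hb, if_neg fun ha => hab ⟨ha, hb⟩]
    · rw [if_neg hb]

lemma exists_apply_ne_zero {m : IncidenceAlgebra F α} (hm : m ≠ 0) :
    ∃ a b, a ≤ b ∧ m a b ≠ 0 := by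
  by_contra h
  push_neg at h
  apply hm
  ext a b hab
  exact h a b hab

/-- the `(s,t)` entry of `u * m * v` when `m` is concentrated at `(s,t)`. -/
lemma sandwich_apply {s t : α} (hst : s ≤ t) {m : IncidenceAlgebra F α}
    (hm : (e s) * m * (e t) = m) (u v : IncidenceAlgebra F α) :
    (u * m * v) s t = u s s * m s t * v t t := by
  have hconc := apply_eq_of_conc hm
  have h1 : (u * m) s t = u s s * m s t := by
    rw [mul_apply]
    have : ∀ x ∈ Icc s t, u s x * m x t = if x = s then u s x * m x t else 0 := by
      intro x _
      by_cases hx : x = s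
      · rw [if_pos hx]
      · rw [if_neg hx, hconc x t, if_neg (by tauto), mul_zero]
    rw [Finset.sum_congr rfl this, Finset.sum_ite_eq']
    simp [mem_Icc, hst]
  have h2 : ∀ w, (u * m) s w = if w = t then (u * m) s t else 0 := by
    intro w
    by_cases hw : w = t
    · rw [if_pos hw, hw]
    · rw [if_neg hw, mul_apply]
      apply Finset.sum_eq_zero
      intro x _
      rw [hconc x w, if_neg (by tauto), mul_zero]
  rw [mul_apply]
  have : ∀ x ∈ Icc s t, (u * m) s x * v x t = if x = t then (u * m) s x * v x t else 0 := by
    intro x _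
    by_cases hx : x = t
    · rw [if_pos hx]
    · rw [if_neg hx, h2 x, if_neg hx, zero_mul]
  rw [Finset.sum_congr rfl this, Finset.sum_ite_eq']
  simp only [mem_Icc, le_refl, hst, and_self, if_pos]
  rw [h1]




variable {F α : Type*} [Field F] [PartialOrder α] [LocallyFiniteOrder α] [DecidableEq α]

/-- right inverse of `f`, as a bare function, recursion in the first argument. -/
private def rFun (f : IncidenceAlgebra F α) (b : α) : α → F
  | a =>
    if a = b then (f b b)⁻¹
    else
      -(f a a)⁻¹ *
        ∑ x ∈ (Ioc a b).attach,
          let h := mem_Ioc.1 x.2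
          have : (Icc (x : α) b).card < (Icc a b).card :=
            card_lt_card (Icc_ssubset_Icc_left (h.1.le.trans h.2) h.1 le_rfl)
          f a x * rFun f b x
termination_by a => (Icc a b).card

private lemma rFun_apply (f : IncidenceAlgebra F α) (a b : α) :
    rFun f b a = if a = b then (f b b)⁻¹
      else -(f a a)⁻¹ * ∑ x ∈ Ioc a b, f a x * rFun f b x := by
  rw [rFun]
  simp only []
  congr 1
  rw [← Finset.sum_attach (Ioc a b) (fun x => f a x * rFun f b x)]

/-- left inverse of `f`, as a bare function, recursion in the second argument. -/
private def lFun (f : IncidenceAlgebra F α) (a : α) : α → F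
  | b =>
    if a = b then (f a a)⁻¹
    else
      -(∑ x ∈ (Ico a b).attach,
          let h := mem_Ico.1 x.2
          have : (Icc a (x : α)).card < (Icc a b).card :=
            card_lt_card (Icc_ssubset_Icc_right (h.1.trans h.2.le) le_rfl h.2)
          lFun f a x * f x b) * (f b b)⁻¹
termination_by b => (Icc a b).card

private lemma lFun_apply (f : IncidenceAlgebra F α) (a b : α) :
    lFun f a b = if a = b then (f a a)⁻¹
      else -(∑ x ∈ Ico a b, lFun f a x * f x b) * (f b b)⁻¹ := by
  rw [lFun]
  simp only []
  congr 2
  rw [← Finset.sum_attach (Ico a b) (fun x => lFun f a x * f x b)]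

private lemma rFun_eq_zero_of_not_le (f : IncidenceAlgebra F α) {a b : α} (h : ¬a ≤ b) :
    rFun f b a = 0 := by
  rw [rFun_apply, if_neg (fun hab : a = b => h (le_of_eq hab)), Ioc_eq_empty (fun hab => h hab.le),
    Finset.sum_empty, mul_zero]

private lemma lFun_eq_zero_of_not_le (f : IncidenceAlgebra F α) {a b : α} (h : ¬a ≤ b) :
    lFun f a b = 0 := by
  rw [lFun_apply, if_neg (fun hab : a = b => h (le_of_eq hab)), Ico_eq_empty (fun hab => h hab.le),
    Finset.sum_empty, neg_zero, zero_mul]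

private def rInv (f : IncidenceAlgebra F α) : IncidenceAlgebra F α :=
  ⟨fun a b => rFun f b a, fun _ _ h => rFun_eq_zero_of_not_le f h⟩

private def lInv (f : IncidenceAlgebra F α) : IncidenceAlgebra F α :=
  ⟨fun a b => lFun f a b, fun _ _ h => lFun_eq_zero_of_not_le f h⟩

private lemma mul_rInv (f : IncidenceAlgebra F α) (hf : ∀ x, f x x ≠ 0) :
    f * rInv f = 1 := by
  ext a b hab
  rw [mul_apply, one_apply, Icc_eq_cons_Ioc hab, Finset.sum_cons]
  have h2 : ∀ x ∈ Ioc a b, f a x * (rInv f) x b = f a x * rFun f b x := fun x _ => rfl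
  rw [Finset.sum_congr rfl h2]
  by_cases hb : a = b
  · subst hb
    rw [Ioc_self, Finset.sum_empty, add_zero, if_pos rfl]
    show f a a * rFun f a a = 1
    rw [rFun_apply, if_pos rfl, mul_inv_cancel₀ (hf a)]
  · rw [if_neg hb]
    have : f a a * (rInv f) a b = -∑ x ∈ Ioc a b, f a x * rFun f b x := by
      show f a a * rFun f b a = _
      rw [rFun_apply, if_neg hb, neg_mul, mul_neg, ← mul_assoc, mul_inv_cancel₀ (hf a), one_mul]
    rw [this, neg_add_cancel]

private lemma lInv_mul (f : IncidenceAlgebra F α) (hf : ∀ x, f x x ≠ 0) :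
    lInv f * f = 1 := by
  ext a b hab
  rw [mul_apply, one_apply, Icc_eq_cons_Ico hab, Finset.sum_cons]
  have h2 : ∀ x ∈ Ico a b, (lInv f) a x * f x b = lFun f a x * f x b := fun x _ => rfl
  rw [Finset.sum_congr rfl h2]
  by_cases hb : a = b
  · subst hb
    rw [Ico_self, Finset.sum_empty, add_zero, if_pos rfl]
    show lFun f a a * f a a = 1
    rw [lFun_apply, if_pos rfl, inv_mul_cancel₀ (hf a)]
  · rw [if_neg hb]
    have : (lInv f) a b * f b b = -∑ x ∈ Ico a b, lFun f a x * f x b := by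
      show lFun f a b * f b b = _
      rw [lFun_apply, if_neg hb, neg_mul, neg_mul, mul_assoc, inv_mul_cancel₀ (hf b), mul_one]
    rw [this, neg_add_cancel]

/-- An element of the incidence algebra with nonzero diagonal is invertible. -/
lemma exists_inv (f : IncidenceAlgebra F α) (hf : ∀ x, f x x ≠ 0) :
    ∃ g, f * g = 1 ∧ g * f = 1 := by
  refine ⟨rInv f, mul_rInv f hf, ?_⟩
  have h1 : lInv f * (f * rInv f) = lInv f := by rw [mul_rInv f hf, mul_one]
  have h2 : lInv f * (f * rInv f) = rInv f := by rw [← mul_assoc, lInv_mul f hf, one_mul]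
  rw [← h1.symm.trans h2, lInv_mul f hf]


variable {F α : Type*} [Field F] [PartialOrder α] [LocallyFiniteOrder α] [DecidableEq α]

/-- diagonal part of an element. -/
def diagPart (q : IncidenceAlgebra F α) : IncidenceAlgebra F α :=
  ⟨fun x y => if x = y then q x x else 0, fun x y h => if_neg (fun he => h (le_of_eq he))⟩

lemma diagPart_apply (q : IncidenceAlgebra F α) (x y : α) :
    diagPart q x y = if x = y then q x x else 0 := rfl

section Idem
variable {q : IncidenceAlgebra F α} (hq : q * q = q)
include hq

lemma diag_boolean (x : α) : q x x = 0 ∨ q x x = 1 := by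
  have h : q x x * q x x = q x x := by rw [← mul_diag q q x, hq]
  have h0 : q x x * (q x x - 1) = 0 := by rw [mul_sub, h, mul_one, sub_self]
  rcases mul_eq_zero.1 h0 with h1 | h1
  · exact Or.inl h1
  · exact Or.inr (by rwa [sub_eq_zero] at h1)

lemma diagPart_idem : diagPart q * diagPart q = diagPart q := by
  ext a b hab
  rw [mul_apply]
  by_cases h : a = b
  · subst h
    rw [Icc_self, Finset.sum_singleton, diagPart_apply, if_pos rfl]
    rcases diag_boolean hq a with h | h <;> rw [h] <;> ring
  · rw [diagPart_apply, if_neg h]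
    apply Finset.sum_eq_zero
    intro x hx
    rw [mem_Icc] at hx
    by_cases hax : a = x
    · rw [diagPart_apply (q := q) x b, if_neg (fun h2 => h (hax.trans h2)), mul_zero]
    · rw [diagPart_apply (q := q) a x, if_neg hax, zero_mul]

/-- the conjugating unit: `u * q = diagPart q * u`, with `u` invertible. -/
lemma exists_conj : ∃ u v : IncidenceAlgebra F α,
    u * v = 1 ∧ v * u = 1 ∧ u * q = diagPart q * u := by
  set d := diagPart q with hd
  set u := d * q + (1 - d) * (1 - q) with hu
  have hdd : d * d = d := diagPart_idem hq
  have hdiag : ∀ x, u x x ≠ 0 := by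
    intro x
    have h1 : u x x = d x x * q x x + (1 - d x x) * (1 - q x x) := by
      rw [hu, IncidenceAlgebra.add_apply, mul_diag, mul_diag, IncidenceAlgebra.sub_apply, IncidenceAlgebra.sub_apply, one_diag]
    have h2 : d x x = q x x := by rw [hd, diagPart_apply, if_pos rfl]
    rcases diag_boolean hq x with h | h <;> rw [h1, h2, h] <;> norm_num
  obtain ⟨v, huv, hvu⟩ := exists_inv u hdiag
  refine ⟨u, v, huv, hvu, ?_⟩
  have hz : (1 - q) * q = 0 := by rw [sub_mul, one_mul, hq, sub_self]
  have hz2 : d * (1 - d) = 0 := by rw [mul_sub, mul_one, hdd, sub_self]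
  have h1 : u * q = d * q := by
    rw [hu, add_mul, mul_assoc, hq, mul_assoc, hz, mul_zero, add_zero]
  have h2 : d * u = d * q := by
    rw [hu, mul_add, ← mul_assoc, hdd, ← mul_assoc, hz2, zero_mul, add_zero]
  rw [h1, ← h2]

lemma eq_zero_of_diag_zero (h0 : ∀ x, q x x = 0) : q = 0 := by
  obtain ⟨u, v, huv, hvu, hcom⟩ := exists_conj hq
  have hd : diagPart q = 0 := by
    ext a b hab
    rw [diagPart_apply, IncidenceAlgebra.zero_apply]
    by_cases h : a = b <;> simp [h, h0]
  rw [hd, zero_mul] at hcom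
  calc q = (v * u) * q := by rw [hvu, one_mul]
    _ = v * (u * q) := by rw [mul_assoc]
    _ = 0 := by rw [hcom, mul_zero]

end Idem


variable {F α : Type*} [Field F] [PartialOrder α] [LocallyFiniteOrder α] [DecidableEq α]

lemma e_ne_zero (s : α) : (e s : IncidenceAlgebra F α) ≠ 0 := single_ne_zero s s le_rfl

lemma e_diag_self (s : α) : (e s : IncidenceAlgebra F α) s s = 1 := single_apply_self s s le_rfl

/-- the diagonal support of `φ (e x)` is a single point. -/
lemma existsUnique_diag_support (φ : IncidenceAlgebra F α ≃ₐ[F] IncidenceAlgebra F α) (x : α) :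
    ∃! z : α, φ (e x) z z ≠ 0 := by
  set q := φ (e x) with hqdef
  have hqq : q * q = q := by rw [hqdef, ← map_mul, e_idem]
  have hqne : q ≠ 0 := by
    intro h0
    exact e_ne_zero x (φ.injective (h0.trans (map_zero φ).symm))
  have hex : ∃ z, q z z ≠ 0 := by
    by_contra hc
    push_neg at hc
    exact hqne (eq_zero_of_diag_zero hqq hc)
  obtain ⟨z₁, hz₁⟩ := hex
  refine ⟨z₁, hz₁, ?_⟩
  intro z₂ hz₂
  by_contra hne
  -- z₂ ≠ z₁ but both carry nonzero diagonal
  obtain ⟨u, v, huv, hvu, hcom⟩ := exists_conj hqq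
  set d := diagPart q with hddef
  have hdd : d * d = d := diagPart_idem hqq
  have hq' : q = v * (d * u) := by
    calc q = (v * u) * q := by rw [hvu, one_mul]
      _ = v * (u * q) := by rw [mul_assoc]
      _ = v * (d * u) := by rw [hcom]
  have hq2 : q z₂ z₂ = 1 := (diag_boolean hqq z₂).resolve_left hz₂
  have hed : (e z₂ : IncidenceAlgebra F α) * d = e z₂ := by
    ext a b hab
    rw [e_mul_apply, e_apply]
    by_cases ha : a = z₂
    · subst ha
      rw [if_pos rfl, diagPart_apply]
      by_cases hb : b = a
      · subst hb; rw [if_pos rfl, if_pos ⟨rfl, rfl⟩, hq2]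
      · rw [if_neg (fun h : a = b => hb h.symm), if_neg (fun h => hb h.2)]
    · rw [if_neg ha, if_neg (fun h => ha h.1)]
  have hde : d * (e z₂ : IncidenceAlgebra F α) = e z₂ := by
    ext a b hab
    rw [mul_e_apply, e_apply]
    by_cases hb : b = z₂
    · subst hb
      rw [if_pos rfl, diagPart_apply]
      by_cases ha : a = b
      · rw [if_pos ha, if_pos ⟨ha, rfl⟩, ha, hq2]
      · rw [if_neg ha, if_neg (fun h => ha h.1)]
    · rw [if_neg hb, if_neg (fun h => hb h.2)]
  have key : ∀ A B : IncidenceAlgebra F α, (v * (A * u)) * (v * (B * u)) = v * ((A * B) * u) := by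
    intro A B
    have h : u * (v * (B * u)) = B * u := by rw [← mul_assoc, huv, one_mul]
    simp only [mul_assoc] at h ⊢
    rw [h]
  have key2 : ∀ A : IncidenceAlgebra F α, u * (v * (A * u)) * v = A := by
    intro A
    rw [← mul_assoc u v (A * u), huv, one_mul, mul_assoc, huv, mul_one]
  set p₁ := φ.symm (v * ((e z₂) * u)) with hp₁
  set p₂ := φ.symm (v * ((d - e z₂) * u)) with hp₂
  have hsum : p₁ + p₂ = e x := by
    rw [hp₁, hp₂, ← map_add]
    have : v * ((e z₂) * u) + v * ((d - e z₂) * u) = v * (d * u) := by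
      rw [← mul_add, ← add_mul]
      congr 2
      abel
    rw [this, ← hq', hqdef, AlgEquiv.symm_apply_apply]
  have horth : p₁ * p₂ = 0 := by
    rw [hp₁, hp₂, ← map_mul, key]
    have : (e z₂ : IncidenceAlgebra F α) * (d - e z₂) = 0 := by
      rw [mul_sub, hed, e_idem, sub_self]
    rw [this, zero_mul, mul_zero, map_zero]
  have hp₁idem : p₁ * p₁ = p₁ := by
    rw [hp₁, ← map_mul, key, e_idem]
  have hp₂idem : p₂ * p₂ = p₂ := by
    rw [hp₂, ← map_mul, key]
    have : (d - e z₂) * (d - e z₂) = d - e z₂ := by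
      rw [sub_mul, mul_sub, mul_sub, hdd, hde, hed, e_idem, sub_sub_sub_cancel_right]
    rw [this]
  have hdiagorth : ∀ z, p₁ z z * p₂ z z = 0 := by
    intro z
    rw [← mul_diag, horth, IncidenceAlgebra.zero_apply]
  have hdiagsum : ∀ z, z ≠ x → p₁ z z + p₂ z z = 0 := by
    intro z hz
    have : (p₁ + p₂) z z = (e x : IncidenceAlgebra F α) z z := by rw [hsum]
    rw [IncidenceAlgebra.add_apply, e_apply, if_neg (fun h => hz h.1)] at this
    exact this
  have hvanish : ∀ (p p' : IncidenceAlgebra F α), p * p = p → p' * p' = p' →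
      (∀ z, p z z * p' z z = 0) → (∀ z, z ≠ x → p z z + p' z z = 0) → p x x = 0 →
      p = 0 := by
    intro p p' hp hp' ho hs hx0
    apply eq_zero_of_diag_zero hp
    intro z
    by_cases hz : z = x
    · rw [hz]; exact hx0
    · rcases diag_boolean hp z with h | h
      · exact h
      · exfalso
        have h1 := ho z
        have h2 := hs z hz
        rw [h] at h1 h2
        rw [one_mul] at h1
        rw [h1, add_zero] at h2
        exact one_ne_zero h2
  by_cases hx1 : p₁ x x = 0
  · -- then p₁ = 0, so e z₂ = 0, absurd
    have hp₁0 : p₁ = 0 := hvanish p₁ p₂ hp₁idem hp₂idem hdiagorth hdiagsum hx1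
    have : v * ((e z₂) * u) = 0 := by
      have := congrArg φ hp₁0
      rwa [hp₁, AlgEquiv.apply_symm_apply, map_zero] at this
    have he0 : (e z₂ : IncidenceAlgebra F α) = 0 := by
      rw [← key2 (e z₂), this, mul_zero, zero_mul]
    exact e_ne_zero z₂ he0
  · -- then p₂ = 0, so d = e z₂, contradicting q z₁ z₁ ≠ 0
    have hx2 : p₂ x x = 0 := by
      rcases diag_boolean hp₁idem x with h | h
      · exact absurd h hx1
      · have := hdiagorth x
        rw [h, one_mul] at this
        exact this
    have hp₂0 : p₂ = 0 :=
      hvanish p₂ p₁ hp₂idem hp₁idem (fun z => by rw [mul_comm]; exact hdiagorth z)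
        (fun z hz => by rw [add_comm]; exact hdiagsum z hz) hx2
    have : v * ((d - e z₂) * u) = 0 := by
      have := congrArg φ hp₂0
      rwa [hp₂, AlgEquiv.apply_symm_apply, map_zero] at this
    have hde0 : d - (e z₂ : IncidenceAlgebra F α) = 0 := by
      rw [← key2 (d - e z₂), this, mul_zero, zero_mul]
    have hdeq : d = (e z₂ : IncidenceAlgebra F α) := by rwa [sub_eq_zero] at hde0
    have : q z₁ z₁ = 0 := by
      have h1 : d z₁ z₁ = q z₁ z₁ := by rw [hddef, diagPart_apply, if_pos rfl]
      have h2 : (e z₂ : IncidenceAlgebra F α) z₁ z₁ = 0 := by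
        rw [e_apply, if_neg (fun h => hne h.1.symm)]
      rw [← h1, hdeq, h2]
    exact hz₁ this

variable (φ : IncidenceAlgebra F α ≃ₐ[F] IncidenceAlgebra F α)

/-- the point map induced by an algebra automorphism. -/
noncomputable def sigma0 (x : α) : α := (existsUnique_diag_support φ x).choose

lemma sigma0_spec (x : α) : φ (e x) (sigma0 φ x) (sigma0 φ x) ≠ 0 :=
  (existsUnique_diag_support φ x).choose_spec.1

lemma sigma0_eq {x z : α} (h : φ (e x) z z ≠ 0) : z = sigma0 φ x :=
  (existsUnique_diag_support φ x).choose_spec.2 z h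

/-- conjugation form of `φ (e x)`. -/
lemma sigma0_conj (x : α) : ∃ u v : IncidenceAlgebra F α,
    u * v = 1 ∧ v * u = 1 ∧ φ (e x) = v * ((e (sigma0 φ x)) * u) := by
  set q := φ (e x) with hqdef
  set s := sigma0 φ x with hs
  have hqq : q * q = q := by rw [hqdef, ← map_mul, e_idem]
  obtain ⟨u, v, huv, hvu, hcom⟩ := exists_conj hqq
  refine ⟨u, v, huv, hvu, ?_⟩
  have hq' : q = v * (diagPart q * u) := by
    calc q = (v * u) * q := by rw [hvu, one_mul]
      _ = v * (u * q) := by rw [mul_assoc]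
      _ = v * (diagPart q * u) := by rw [hcom]
  have hd : diagPart q = e s := by
    ext a b hab
    rw [diagPart_apply, e_apply]
    by_cases hab' : a = b
    · subst hab'
      by_cases ha : a = s
      · rw [if_pos rfl, if_pos ⟨ha, ha⟩, ha]
        exact ((diag_boolean hqq _).resolve_left (sigma0_spec φ x))
      · rw [if_pos rfl, if_neg (fun h => ha h.1)]
        by_contra hqa
        exact ha (sigma0_eq φ hqa)
    · rw [if_neg hab', if_neg (fun h => hab' (h.1.trans h.2.symm))]
  rw [← hd, ← hq']

lemma sigma0_symm_sigma0 (x : α) : sigma0 φ.symm (sigma0 φ x) = x := by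
  obtain ⟨u, v, huv, hvu, hq⟩ := sigma0_conj φ x
  set s := sigma0 φ x with hs
  have hes : (e s : IncidenceAlgebra F α) = u * (φ (e x)) * v := by
    rw [hq, ← mul_assoc u v (e s * u), huv, one_mul, mul_assoc, huv, mul_one]
  have h2 : φ.symm (e s) = φ.symm u * (e x) * φ.symm v := by
    rw [hes, map_mul, map_mul, AlgEquiv.symm_apply_apply]
  have h3 : φ.symm (e s) x x = φ.symm u x x * φ.symm v x x := by
    rw [h2, mul_diag, mul_diag, e_diag_self, mul_one]
  have h4 : φ.symm u x x * φ.symm v x x = 1 := by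
    rw [← mul_diag, ← map_mul, huv, map_one, one_diag]
  have h5 : φ.symm (e s) x x ≠ 0 := by rw [h3, h4]; exact one_ne_zero
  exact (sigma0_eq φ.symm h5).symm

/-- monotonicity together with the key nonvanishing entry. -/
lemma sigma0_key {x y : α} (hxy : x ≤ y) :
    sigma0 φ x ≤ sigma0 φ y ∧ φ (single x y hxy) (sigma0 φ x) (sigma0 φ y) ≠ 0 := by
  obtain ⟨u, v, huv, hvu, hq⟩ := sigma0_conj φ x
  obtain ⟨u', v', hu'v', hv'u', hq'⟩ := sigma0_conj φ y
  set s := sigma0 φ x with hs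
  set t := sigma0 φ y with ht
  set h := φ (single x y hxy) with hh
  have hmid : φ (e x) * h * φ (e y) = h := by
    rw [hh, ← map_mul, ← map_mul, e_mul_single_mul_e]
  have hne : h ≠ 0 := by
    intro h0
    exact single_ne_zero x y hxy (φ.injective (h0.trans (map_zero φ).symm))
  set k := u * h * v' with hk
  have h1 : (e s : IncidenceAlgebra F α) * u = u * φ (e x) := by
    rw [hq, ← mul_assoc, huv, one_mul]
  have h2 : v' * (e t : IncidenceAlgebra F α) = φ (e y) * v' := by
    rw [hq', mul_assoc, mul_assoc, hu'v', mul_one]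
  have hconc : (e s : IncidenceAlgebra F α) * k * (e t) = k := by
    calc (e s : IncidenceAlgebra F α) * (u * h * v') * (e t)
        = (e s * u) * h * (v' * e t) := by simp only [mul_assoc]
      _ = (u * φ (e x)) * h * (φ (e y) * v') := by rw [h1, h2]
      _ = u * (φ (e x) * h * φ (e y)) * v' := by simp only [mul_assoc]
      _ = u * h * v' := by rw [hmid]
  have hrec : v * k * u' = h := by
    calc v * (u * h * v') * u' = (v * u) * (h * (v' * u')) := by simp only [mul_assoc]
      _ = h := by rw [hvu, hv'u', one_mul, mul_one]
  have hkne : k ≠ 0 := by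
    intro k0
    rw [k0, mul_zero, zero_mul] at hrec
    exact hne hrec.symm
  have hkst : k s t ≠ 0 := by
    intro h0
    apply hkne
    ext a b hab
    rw [apply_eq_of_conc hconc a b, IncidenceAlgebra.zero_apply]
    by_cases hc : a = s ∧ b = t
    · rw [if_pos hc, h0]
    · rw [if_neg hc]
  have hst : s ≤ t := le_of_ne_zero hkst
  refine ⟨hst, ?_⟩
  have hsand : (v * k * u') s t = v s s * k s t * u' t t := sandwich_apply hst hconc v u'
  have hv : v s s ≠ 0 := by
    have : v s s * u s s = 1 := by rw [← mul_diag, hvu, one_diag]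
    exact left_ne_zero_of_mul_eq_one this
  have hu' : u' t t ≠ 0 := by
    have : u' t t * v' t t = 1 := by rw [← mul_diag, hu'v', one_diag]
    exact left_ne_zero_of_mul_eq_one this
  rw [← hrec, hsand]
  exact mul_ne_zero (mul_ne_zero hv hkst) hu'


variable {F α : Type*} [Field F] [PartialOrder α] [LocallyFiniteOrder α] [DecidableEq α]

/-- transport of incidence algebra elements along an order automorphism. -/
def mapFun (σ : α ≃o α) (f : IncidenceAlgebra F α) : IncidenceAlgebra F α :=
  ⟨fun x y => f (σ.symm x) (σ.symm y), fun x y h =>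
    apply_eq_zero_of_not_le (fun hc => h (σ.symm.le_iff_le.mp hc)) f⟩

@[simp] lemma mapFun_apply (σ : α ≃o α) (f : IncidenceAlgebra F α) (x y : α) :
    mapFun σ f x y = f (σ.symm x) (σ.symm y) := rfl

lemma mapFun_mul (σ : α ≃o α) (f g : IncidenceAlgebra F α) :
    mapFun σ (f * g) = mapFun σ f * mapFun σ g := by
  ext a b hab
  rw [mapFun_apply, mul_apply, mul_apply]
  refine Finset.sum_nbij' (i := fun z => σ z) (j := fun w => σ.symm w) ?_ ?_ ?_ ?_ ?_
  · intro z hz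
    rw [mem_Icc] at hz ⊢
    exact ⟨σ.symm_apply_le.mp hz.1, σ.le_symm_apply.mp hz.2⟩
  · intro w hw
    rw [mem_Icc] at hw ⊢
    exact ⟨σ.symm.le_iff_le.mpr hw.1, σ.symm.le_iff_le.mpr hw.2⟩
  · intro z _
    exact σ.symm_apply_apply z
  · intro w _
    exact σ.apply_symm_apply w
  · intro z _
    show _ = (mapFun σ f) a (σ z) * (mapFun σ g) (σ z) b
    rw [mapFun_apply, mapFun_apply, σ.symm_apply_apply]

lemma mapFun_symm_mapFun (σ : α ≃o α) (f : IncidenceAlgebra F α) :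
    mapFun σ.symm (mapFun σ f) = f := by
  ext a b _
  rw [mapFun_apply, mapFun_apply, OrderIso.symm_symm, σ.symm_apply_apply, σ.symm_apply_apply]

lemma mapFun_mapFun_symm (σ : α ≃o α) (f : IncidenceAlgebra F α) :
    mapFun σ (mapFun σ.symm f) = f := by
  ext a b _
  rw [mapFun_apply, mapFun_apply, OrderIso.symm_symm, σ.apply_symm_apply, σ.apply_symm_apply]

/-- the algebra automorphism of the incidence algebra induced by an order automorphism. -/
def mapEquiv (σ : α ≃o α) : IncidenceAlgebra F α ≃ₐ[F] IncidenceAlgebra F α where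
  toFun := mapFun σ
  invFun := mapFun σ.symm
  left_inv := mapFun_symm_mapFun σ
  right_inv := mapFun_mapFun_symm σ
  map_mul' := mapFun_mul σ
  map_add' := fun f g => by
    ext a b _
    rw [mapFun_apply, IncidenceAlgebra.add_apply, IncidenceAlgebra.add_apply, mapFun_apply, mapFun_apply]
  commutes' := fun c => by
    ext a b _
    rw [Algebra.algebraMap_eq_smul_one, mapFun_apply, constSMul_apply, constSMul_apply,
      one_apply, one_apply]
    congr 1
    by_cases h : a = b
    · rw [if_pos h, if_pos (by rw [h])]
    · rw [if_neg h, if_neg (fun hc => h (σ.symm.injective hc))]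

lemma mapEquiv_apply (σ : α ≃o α) (f : IncidenceAlgebra F α) (x y : α) :
    mapEquiv σ f x y = f (σ.symm x) (σ.symm y) := rfl


variable {F α : Type*} [Field F] [PartialOrder α] [LocallyFiniteOrder α] [DecidableEq α]

lemma mem_elemSubspace {G : Type*} [Group G] {θ : α → G} {g : G} {f : IncidenceAlgebra F α} :
    f ∈ elemSubspace F θ g ↔ ∀ x y : α, x ≤ y → (θ x)⁻¹ * θ y ≠ g → f x y = 0 :=
  Iff.rfl

lemma group_rearrange {G : Type*} [Group G] {m n p q : G} (h : m * p⁻¹ = n * q⁻¹) :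
    p⁻¹ * q = m⁻¹ * n := by
  have h2 := congrArg (fun z => m⁻¹ * z * q) h
  simpa [mul_assoc] using h2

lemma group_rearrange2 {G : Type*} [Group G] {m n p q : G} (h : m⁻¹ * n = p⁻¹ * q) :
    m * p⁻¹ = n * q⁻¹ := by
  have h2 := congrArg (fun z => m * z * q⁻¹) h
  simpa [mul_assoc] using h2.symm

lemma sigma0_grading {G : Type*} [Group G]
    (φ : IncidenceAlgebra F α ≃ₐ[F] IncidenceAlgebra F α) (θ μ : α → G)
    (hsub : ∀ g : G, ∀ f ∈ elemSubspace F θ g, φ f ∈ elemSubspace F μ g)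
    {x y : α} (hxy : x ≤ y) :
    (μ (sigma0 φ x))⁻¹ * μ (sigma0 φ y) = (θ x)⁻¹ * θ y := by
  have hsingle : single x y hxy ∈ elemSubspace F θ ((θ x)⁻¹ * θ y) := by
    refine mem_elemSubspace.mpr ?_
    intro a b hab hg
    rw [single_apply]
    refine if_neg ?_
    rintro ⟨rfl, rfl⟩
    exact hg rfl
  have hmem := hsub _ _ hsingle
  obtain ⟨hst, hne⟩ := sigma0_key φ hxy
  by_contra hgne
  exact hne (mem_elemSubspace.mp hmem _ _ hst hgne)


end IncidenceAux

open IncidenceAux in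
/-- for `θ, μ : P → G` with `G_θ` and `G_μ` finite, the elementary graded
algebras `A^θ` and `A^μ` are isomorphic as `G`-graded algebras (there is an algebra
automorphism of `I(P,F)` carrying `A^θ(g)` onto `A^μ(g)` for all `g`) if and only if there
is an order automorphism `σ` of `P` such that `x ↦ μ(x) * θ(σ⁻¹ x)⁻¹` is constant on each
connected component of `P`. -/
theorem gradedIso_iff {F α G : Type*} [Field F] [PartialOrder α] [LocallyFiniteOrder α]
    [DecidableEq α] [Group G] (θ μ : α → G)
    (hθ : {g : G | ∃ x y : α, x ≤ y ∧ (θ x)⁻¹ * θ y = g}.Finite)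
    (hμ : {g : G | ∃ x y : α, x ≤ y ∧ (μ x)⁻¹ * μ y = g}.Finite) :
    (∃ φ : IncidenceAlgebra F α ≃ₐ[F] IncidenceAlgebra F α,
        ∀ g : G, (elemSubspace F θ g).map φ.toLinearMap = elemSubspace F μ g) ↔
      ∃ σ : α ≃o α, ∀ x y : α, Relation.EqvGen (fun a b : α => a ≤ b ∨ b ≤ a) x y →
        μ x * (θ (σ.symm x))⁻¹ = μ y * (θ (σ.symm y))⁻¹ := by
  constructor
  · rintro ⟨φ, hφ⟩
    have hsub : ∀ g : G, ∀ f ∈ elemSubspace F θ g, φ f ∈ elemSubspace F μ g := by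
      intro g f hf
      rw [← hφ g]
      exact ⟨f, hf, rfl⟩
    have hright : ∀ z, sigma0 φ (sigma0 φ.symm z) = z := by
      intro z
      have h := sigma0_symm_sigma0 φ.symm z
      rwa [AlgEquiv.symm_symm] at h
    let eqv : α ≃ α := ⟨sigma0 φ, sigma0 φ.symm, sigma0_symm_sigma0 φ, hright⟩
    let σ : α ≃o α :=
      { toEquiv := eqv
        map_rel_iff' := by
          intro x y
          constructor
          · intro h
            have h2 := (sigma0_key φ.symm h).1
            have hx : sigma0 φ.symm (eqv x) = x := sigma0_symm_sigma0 φ x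
            have hy : sigma0 φ.symm (eqv y) = y := sigma0_symm_sigma0 φ y
            rwa [hx, hy] at h2
          · intro h
            exact (sigma0_key φ h).1 }
    have hsymm : ∀ z, σ.symm z = sigma0 φ.symm z := fun z => rfl
    have happ : ∀ z, σ z = sigma0 φ z := fun z => rfl
    refine ⟨σ, ?_⟩
    have const_of_le : ∀ a b : α, a ≤ b →
        μ a * (θ (σ.symm a))⁻¹ = μ b * (θ (σ.symm b))⁻¹ := by
      intro a b hab
      have hab' : σ.symm a ≤ σ.symm b := σ.symm.le_iff_le.mpr hab
      have key := sigma0_grading φ θ μ hsub hab'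
      have ha : sigma0 φ (σ.symm a) = a := σ.apply_symm_apply a
      have hb : sigma0 φ (σ.symm b) = b := σ.apply_symm_apply b
      rw [ha, hb] at key
      exact group_rearrange2 key
    intro x y hxy
    induction hxy with
    | rel a b hab =>
        rcases hab with h | h
        · exact const_of_le a b h
        · exact (const_of_le b a h).symm
    | refl a => rfl
    | symm a b _ ih => exact ih.symm
    | trans a b c _ _ ih1 ih2 => exact ih1.trans ih2
  · rintro ⟨σ, hconst⟩
    have hgrp : ∀ a b : α, a ≤ b →
        (θ (σ.symm a))⁻¹ * θ (σ.symm b) = (μ a)⁻¹ * μ b := by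
      intro a b hab
      exact group_rearrange (hconst a b (Relation.EqvGen.rel a b (Or.inl hab)))
    refine ⟨mapEquiv σ, ?_⟩
    intro g
    refine Submodule.ext fun h => ⟨?_, ?_⟩
    · intro hh
      obtain ⟨f, hf, hfh⟩ := Submodule.mem_map.mp hh
      refine mem_elemSubspace.mpr ?_
      intro a b hab hg
      rw [← hfh]
      show f (σ.symm a) (σ.symm b) = 0
      refine mem_elemSubspace.mp hf _ _ (σ.symm.le_iff_le.mpr hab) ?_
      rw [hgrp a b hab]
      exact hg
    · intro hh
      refine Submodule.mem_map.mpr ⟨mapFun σ.symm h, ?_, ?_⟩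
      · refine mem_elemSubspace.mpr ?_
        intro a b hab hg
        show h (σ.symm.symm a) (σ.symm.symm b) = 0
        rw [OrderIso.symm_symm]
        have hab' : σ a ≤ σ b := σ.le_iff_le.mpr hab
        refine mem_elemSubspace.mp hh _ _ hab' ?_
        have := hgrp (σ a) (σ b) hab'
        rw [σ.symm_apply_apply, σ.symm_apply_apply] at this
        rw [← this]
        exact hg
      · show mapFun σ (mapFun σ.symm h) = h
        exact mapFun_mapFun_symm σ h
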